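/- Let q be a real number with 0 < q < 1. Then the q-Euler numbers satisfy the recurrence E_{0,q} = [2]_q / 2, and for every integer n ≥ 1, (1 + q^n) E_{n,q} = − Σ_{l=0}^{n−1} C(n,l) q^l E_{l,q}; equivalently E_{n,q} = −(1/[2]_{q^n}) Σ_{l=0}^{n−1} C(n,l) q^l E_{l,q} where [2]_{q^n} = 1 + q^n. -/

import Mathlib

open Finset

/-- The q-analogue `[x]_q = (1 - q^x)/(1 - q)` for real `x` (using the real power `q ^ x`). -/
noncomputable def qNum (q x : ℝ) : ℝ := (1 - q ^ x) / (1 - q)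

/-- The q-Euler polynomial
`E_n(x, h | q) = [2]_q (1-q)^{-n} Σ_{l=0}^{n} C(n,l) (-1)^l q^{lx} / (1 + q^{l+h})`. -/
noncomputable def qEuler (q : ℝ) (n h : ℕ) (x : ℝ) : ℝ :=
  (1 + q) * ((1 - q) ^ n)⁻¹ *
    ∑ l ∈ range (n + 1), (n.choose l : ℝ) * (-1) ^ l * q ^ ((l : ℝ) * x) / (1 + q ^ (l + h))

lemma qe_inner_sum (x : ℝ) {j n : ℕ} (hjn : j ≤ n) :
    ∑ l ∈ Ico j (n+1), (n.choose l : ℝ) * (l.choose j : ℝ) * x ^ l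
      = (n.choose j : ℝ) * x ^ j * (x + 1) ^ (n - j) := by
  rw [Finset.sum_Ico_eq_sum_range]
  have h : n + 1 - j = (n - j) + 1 := by omega
  rw [h, add_pow x 1 (n - j), Finset.mul_sum]
  refine Finset.sum_congr rfl fun m hm => ?_
  have hm' : m ≤ n - j := Nat.lt_succ_iff.mp (Finset.mem_range.mp hm)
  have hc : n.choose (j + m) * (j + m).choose j = n.choose j * (n - j).choose m := by
    have := Nat.choose_mul (n := n) (Nat.le_add_right j m)
    simpa using this
  have hc' : (n.choose (j + m) : ℝ) * ((j + m).choose j : ℝ)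
      = (n.choose j : ℝ) * ((n - j).choose m : ℝ) := by exact_mod_cast hc
  rw [pow_add, one_pow]
  linear_combination (x ^ j * x ^ m) * hc'

lemma qe_at_zero (q : ℝ) (n : ℕ) : qEuler q n 0 0 = (1 + q) * ((1 - q) ^ n)⁻¹ *
    ∑ l ∈ range (n + 1), (n.choose l : ℝ) * (-1) ^ l / (1 + q ^ l) := by
  unfold qEuler
  simp [mul_zero, Real.rpow_zero]

lemma qe_key (q : ℝ) (hq0 : 0 < q) (hq1 : q < 1) (n : ℕ) :
    ∑ l ∈ range (n + 1), (n.choose l : ℝ) * q ^ l * qEuler q l 0 0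
      = (1 + q) * ((1 - q) ^ n)⁻¹ *
          ∑ j ∈ range (n + 1), (n.choose j : ℝ) * (-1) ^ j * q ^ j / (1 + q ^ j) := by
  have h1q : (1 : ℝ) - q ≠ 0 := by intro h; linarith
  have hden : ∀ j : ℕ, (1 : ℝ) + q ^ j ≠ 0 := fun j => by positivity
  set x : ℝ := q * (1 - q)⁻¹ with hx
  set g : ℕ → ℕ → ℝ := fun l j =>
    ((1 + q) * ((-1) ^ j / (1 + q ^ j))) * ((n.choose l : ℝ) * (l.choose j : ℝ) * x ^ l)
    with hg
  have step1 : ∑ l ∈ range (n + 1), (n.choose l : ℝ) * q ^ l * qEuler q l 0 0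
      = ∑ l ∈ range (n + 1), ∑ j ∈ range (l + 1), g l j := by
    simp only [qe_at_zero, Finset.mul_sum]
    refine Finset.sum_congr rfl fun l _ => Finset.sum_congr rfl fun j _ => ?_
    simp only [hg, hx, mul_pow, inv_pow]
    ring
  rw [step1]
  have swap : ∑ l ∈ range (n + 1), ∑ j ∈ range (l + 1), g l j
      = ∑ j ∈ range (n + 1), ∑ l ∈ Ico j (n + 1), g l j := by
    simp only [range_eq_Ico]
    exact (Finset.sum_Ico_Ico_comm 0 (n + 1) (fun j l => g l j)).symm
  rw [swap, Finset.mul_sum]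
  refine Finset.sum_congr rfl fun j hj => ?_
  have hjn : j ≤ n := Nat.lt_succ_iff.mp (Finset.mem_range.mp hj)
  have : ∑ l ∈ Ico j (n + 1), g l j
      = ((1 + q) * ((-1) ^ j / (1 + q ^ j))) *
        ∑ l ∈ Ico j (n + 1), (n.choose l : ℝ) * (l.choose j : ℝ) * x ^ l := by
    rw [Finset.mul_sum]
  rw [this, qe_inner_sum x hjn]
  have hx1 : x + 1 = (1 - q)⁻¹ := by
    rw [hx]; field_simp; ring
  rw [hx1]
  have hpow : ((1 - q) ^ j)⁻¹ * ((1 - q) ^ (n - j))⁻¹ = ((1 - q) ^ n)⁻¹ := by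
    rw [← mul_inv, ← pow_add, Nat.add_sub_cancel' hjn]
  have hxj : x ^ j = q ^ j * ((1 - q) ^ j)⁻¹ := by rw [hx, mul_pow, inv_pow]
  have hn : (1 - q) ^ n = (1 - q) ^ j * (1 - q) ^ (n - j) := by
    rw [← pow_add, Nat.add_sub_cancel' hjn]
  rw [hxj, inv_pow, hn]
  field_simp

/-- the recurrence for the q-Euler numbers:
`E_{0,q} = [2]_q / 2` and, for `n ≥ 1`,
`(1 + qⁿ) E_{n,q} = - Σ_{l=0}^{n-1} C(n,l) q^l E_{l,q}`, equivalently
`E_{n,q} = -(1/(1+qⁿ)) Σ_{l=0}^{n-1} C(n,l) q^l E_{l,q}`. -/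
theorem qEuler_number_recurrence (q : ℝ) (hq0 : 0 < q) (hq1 : q < 1) :
    qEuler q 0 0 0 = (1 + q) / 2 ∧
    ∀ n : ℕ, 1 ≤ n →
      (1 + q ^ n) * qEuler q n 0 0
          = - ∑ l ∈ range n, (n.choose l : ℝ) * q ^ l * qEuler q l 0 0 ∧
      qEuler q n 0 0
          = - (1 / (1 + q ^ n)) * ∑ l ∈ range n, (n.choose l : ℝ) * q ^ l * qEuler q l 0 0 := by
  have hden : ∀ j : ℕ, (1 : ℝ) + q ^ j ≠ 0 := fun j => by positivity
  constructor
  · rw [qe_at_zero]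
    norm_num
    ring
  · intro n hn
    have hsum : ∑ l ∈ range (n + 1), (n.choose l : ℝ) * q ^ l * qEuler q l 0 0
        + qEuler q n 0 0 = 0 := by
      rw [qe_key q hq0 hq1 n, qe_at_zero, ← mul_add, ← Finset.sum_add_distrib]
      have hterm : ∀ j ∈ range (n + 1),
          (n.choose j : ℝ) * (-1) ^ j * q ^ j / (1 + q ^ j)
            + (n.choose j : ℝ) * (-1) ^ j / (1 + q ^ j)
          = (-1) ^ j * (n.choose j : ℝ) := by
        intro j _
        field_simp
        ring
      rw [Finset.sum_congr rfl hterm]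
      have hz : (∑ m ∈ range (n + 1), ((-1) ^ m * (n.choose m : ℝ))) = 0 := by
        exact_mod_cast Int.alternating_sum_range_choose_of_ne (by omega : n ≠ 0)
      rw [hz, mul_zero]
    rw [Finset.sum_range_succ, Nat.choose_self] at hsum
    push_cast at hsum
    constructor
    · linear_combination hsum
    · have h : (1 : ℝ) + q ^ n ≠ 0 := hden n
      field_simp
      linear_combination hsum
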